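/- Let G₁ and G₂ be finite connected simple graphs, each having at least two vertices and containing no well-connected vertex. Then the connective eccentric index of the disjunction G₁ ∨ G₂ equals |E(G₁)|·|V(G₂)|² + |E(G₂)|·|V(G₁)|² − 2·|E(G₁)|·|E(G₂)|. -/

import Mathlib

/-- The eccentricity of a vertex `v` in a finite graph `G`:
the maximum distance from `v` to any other vertex. -/
noncomputable def eccentricity {V : Type*} [Fintype V] (G : SimpleGraph V) (v : V) : ℕ :=
  Finset.univ.sup fun u => G.dist v u

/-- The connective eccentric index `C^ξ(G) = ∑_v deg(v)/ε(v)`, as a rational number. -/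
noncomputable def connEccIndex {V : Type*} [Fintype V] (G : SimpleGraph V) : ℚ :=
  letI := Classical.decRel G.Adj
  ∑ v : V, (G.degree v : ℚ) / (eccentricity G v)

/-- The number of edges of `G`. -/
noncomputable def numEdges {V : Type*} (G : SimpleGraph V) : ℕ := G.edgeSet.ncard

/-- A vertex is well-connected if it is adjacent to every other vertex. -/
def IsWellConnected {V : Type*} (G : SimpleGraph V) (v : V) : Prop :=
  ∀ u : V, u ≠ v → G.Adj v u

/-- The disjunction `G₁ ∨ G₂`: vertex set `V(G₁) × V(G₂)`, where `(u₁,u₂)` is adjacent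
to `(v₁,v₂)` iff `u₁ ~ v₁` in `G₁` or `u₂ ~ v₂` in `G₂`. -/
def disjunctionGraph {V W : Type*} (G : SimpleGraph V) (H : SimpleGraph W) :
    SimpleGraph (V × W) where
  Adj x y := G.Adj x.1 y.1 ∨ H.Adj x.2 y.2
  symm := by
    constructor
    intro x y h
    exact h.imp (fun h1 => G.symm.symm _ _ h1) (fun h2 => H.symm.symm _ _ h2)
  loopless := by
    constructor
    intro x h
    rcases h with h1 | h2
    · exact G.loopless.irrefl _ h1
    · exact H.loopless.irrefl _ h2

section Aux

open Finset

variable {V W : Type*} [Fintype V] [Fintype W]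

lemma exists_adj_of_connected {G : SimpleGraph V} (hconn : G.Connected)
    (hV : 2 ≤ Fintype.card V) (u : V) : ∃ a, G.Adj u a := by
  obtain ⟨u', hne⟩ := Fintype.exists_ne_of_one_lt_card (by omega) u
  obtain ⟨p⟩ := hconn u u'
  cases p with
  | nil => exact absurd rfl hne.symm
  | cons h q => exact ⟨_, h⟩

lemma disj_dist_le_two {G : SimpleGraph V} {H : SimpleGraph W}
    (hGconn : G.Connected) (hHconn : H.Connected)
    (hV : 2 ≤ Fintype.card V) (hW : 2 ≤ Fintype.card W)
    (x y : V × W) : (disjunctionGraph G H).dist x y ≤ 2 := by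
  obtain ⟨a, ha⟩ := exists_adj_of_connected hGconn hV x.1
  obtain ⟨b, hb⟩ := exists_adj_of_connected hHconn hW y.2
  have h1 : (disjunctionGraph G H).Adj x (a, b) := Or.inl ha
  have h2 : (disjunctionGraph G H).Adj (a, b) y := Or.inr hb.symm
  have := SimpleGraph.dist_le (SimpleGraph.Walk.cons h1 (SimpleGraph.Walk.cons h2 SimpleGraph.Walk.nil))
  simpa using this

lemma disj_ecc_two {G : SimpleGraph V} {H : SimpleGraph W}
    (hGconn : G.Connected) (hHconn : H.Connected)
    (hV : 2 ≤ Fintype.card V) (hW : 2 ≤ Fintype.card W)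
    (hG : ∀ v : V, ¬ IsWellConnected G v) (hH : ∀ w : W, ¬ IsWellConnected H w)
    (x : V × W) : eccentricity (disjunctionGraph G H) x = 2 := by
  have hle : ∀ y, (disjunctionGraph G H).dist x y ≤ 2 :=
    fun y => disj_dist_le_two hGconn hHconn hV hW x y
  obtain ⟨u', hu'⟩ := not_forall.mp (hG x.1)
  obtain ⟨w', hw'⟩ := not_forall.mp (hH x.2)
  rw [Classical.not_imp] at hu' hw'
  set y : V × W := (u', w') with hy
  have hne : x ≠ y := fun h => hu'.1 (by rw [h])
  have hnadj : ¬ (disjunctionGraph G H).Adj x y := by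
    rintro (h | h)
    · exact hu'.2 h
    · exact hw'.2 h
  have hreach : (disjunctionGraph G H).Reachable x y := by
    obtain ⟨a, ha⟩ := exists_adj_of_connected hGconn hV x.1
    obtain ⟨b, hb⟩ := exists_adj_of_connected hHconn hW y.2
    have h1 : (disjunctionGraph G H).Adj x (a, b) := Or.inl ha
    have h2 : (disjunctionGraph G H).Adj (a, b) y := Or.inr hb.symm
    exact ⟨SimpleGraph.Walk.cons h1 (SimpleGraph.Walk.cons h2 SimpleGraph.Walk.nil)⟩
  have hpos : 0 < (disjunctionGraph G H).dist x y := hreach.pos_dist_of_ne hne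
  have hone : (disjunctionGraph G H).dist x y ≠ 1 := fun h =>
    hnadj (SimpleGraph.dist_eq_one_iff_adj.mp h)
  have hd2 : (disjunctionGraph G H).dist x y = 2 := by
    have h2 := hle y; omega
  refine le_antisymm (Finset.sup_le fun y _ => hle y) ?_
  calc 2 = (disjunctionGraph G H).dist x y := hd2.symm
    _ ≤ _ := Finset.le_sup (Finset.mem_univ y)

lemma sum_adj_ite (G : SimpleGraph V) [DecidableRel G.Adj] :
    ∑ u : V, ∑ v : V, (if G.Adj u v then (1 : ℚ) else 0) = 2 * (numEdges G : ℚ) := by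
  have h1 : ∀ u : V, ∑ v : V, (if G.Adj u v then (1 : ℚ) else 0) = (G.degree u : ℚ) := by
    intro u
    rw [Finset.sum_boole, SimpleGraph.degree, SimpleGraph.neighborFinset_eq_filter]
  simp_rw [h1]
  rw [← Nat.cast_sum, SimpleGraph.sum_degrees_eq_twice_card_edges]
  have : numEdges G = G.edgeFinset.card := by
    rw [numEdges, SimpleGraph.edgeFinset, Set.ncard_eq_toFinset_card']
  rw [this]
  push_cast
  ring

lemma sum_prod_fst (f : V → ℚ) :
    ∑ x : V × W, f x.1 = (Fintype.card W : ℚ) * ∑ v : V, f v := by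
  rw [Fintype.sum_prod_type]
  simp only [Finset.sum_const, Finset.card_univ, nsmul_eq_mul, mul_comm]
  rw [Finset.sum_mul]

lemma sum_prod_mul (f : V → ℚ) (g : W → ℚ) :
    ∑ x : V × W, f x.1 * g x.2 = (∑ v : V, f v) * (∑ w : W, g w) := by
  rw [Fintype.sum_prod_type, Finset.sum_mul_sum]

end Aux

/-- The connective eccentric index of the disjunction of two connected graphs without
well-connected vertices equals
`|E(G₁)||V(G₂)|² + |E(G₂)||V(G₁)|² − 2|E(G₁)||E(G₂)|`. -/
theorem connEccIndex_disjunction {V W : Type*} [Fintype V] [Fintype W]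
    (G : SimpleGraph V) (H : SimpleGraph W)
    (hGconn : G.Connected) (hHconn : H.Connected)
    (hV : 2 ≤ Fintype.card V) (hW : 2 ≤ Fintype.card W)
    (hG : ∀ v : V, ¬ IsWellConnected G v) (hH : ∀ w : W, ¬ IsWellConnected H w) :
    connEccIndex (disjunctionGraph G H) =
      (numEdges G : ℚ) * (Fintype.card W : ℚ) ^ 2
        + (numEdges H : ℚ) * (Fintype.card V : ℚ) ^ 2
        - 2 * (numEdges G : ℚ) * (numEdges H : ℚ) := by
  classical
  have hecc := disj_ecc_two hGconn hHconn hV hW hG hH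
  rw [connEccIndex]
  have hdeg : ∀ x : V × W,
      (((disjunctionGraph G H).degree x : ℚ)) =
        ∑ y : V × W, (if (disjunctionGraph G H).Adj x y then (1 : ℚ) else 0) := by
    intro x
    rw [Finset.sum_boole, SimpleGraph.degree, SimpleGraph.neighborFinset_eq_filter]
  have hsplit : ∀ x y : V × W,
      (if (disjunctionGraph G H).Adj x y then (1 : ℚ) else 0) =
        (if G.Adj x.1 y.1 then (1 : ℚ) else 0) + (if H.Adj x.2 y.2 then (1 : ℚ) else 0)
          - (if G.Adj x.1 y.1 then (1 : ℚ) else 0) * (if H.Adj x.2 y.2 then (1 : ℚ) else 0) := by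
    intro x y
    have hiff : (disjunctionGraph G H).Adj x y ↔ (G.Adj x.1 y.1 ∨ H.Adj x.2 y.2) := Iff.rfl
    by_cases h1 : G.Adj x.1 y.1 <;> by_cases h2 : H.Adj x.2 y.2 <;> simp [hiff, h1, h2]
  have key : ∑ x : V × W,
      ((disjunctionGraph G H).degree x : ℚ) / (eccentricity (disjunctionGraph G H) x)
      = (∑ x : V × W, ∑ y : V × W,
          (if (disjunctionGraph G H).Adj x y then (1 : ℚ) else 0)) / 2 := by
    rw [Finset.sum_div]
    refine Finset.sum_congr rfl fun x _ => ?_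
    rw [hecc x, hdeg x]
    norm_num
  rw [key]
  simp_rw [hsplit, Finset.sum_sub_distrib, Finset.sum_add_distrib]
  have e1 : ∑ x : V × W, ∑ y : V × W, (if G.Adj x.1 y.1 then (1 : ℚ) else 0)
      = 2 * (numEdges G : ℚ) * (Fintype.card W : ℚ) ^ 2 := by
    have inner : ∀ x : V × W, ∑ y : V × W, (if G.Adj x.1 y.1 then (1 : ℚ) else 0)
        = (Fintype.card W : ℚ) * ∑ v : V, (if G.Adj x.1 v then (1 : ℚ) else 0) := by
      intro x
      exact sum_prod_fst (fun v => if G.Adj x.1 v then (1 : ℚ) else 0)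
    simp_rw [inner]
    rw [sum_prod_fst (fun u => (Fintype.card W : ℚ) * ∑ v : V, (if G.Adj u v then (1 : ℚ) else 0))]
    rw [← Finset.mul_sum, sum_adj_ite G]
    ring
  have e2 : ∑ x : V × W, ∑ y : V × W, (if H.Adj x.2 y.2 then (1 : ℚ) else 0)
      = 2 * (numEdges H : ℚ) * (Fintype.card V : ℚ) ^ 2 := by
    have inner : ∀ x : V × W, ∑ y : V × W, (if H.Adj x.2 y.2 then (1 : ℚ) else 0)
        = (Fintype.card V : ℚ) * ∑ w : W, (if H.Adj x.2 w then (1 : ℚ) else 0) := by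
      intro x
      have := sum_prod_mul (V := V) (W := W) (fun _ => (1 : ℚ))
        (fun w => if H.Adj x.2 w then (1 : ℚ) else 0)
      simpa [Finset.card_univ] using this
    simp_rw [inner]
    have outer := sum_prod_mul (V := V) (W := W) (fun _ => (1 : ℚ))
      (fun u => (Fintype.card V : ℚ) * ∑ w : W, (if H.Adj u w then (1 : ℚ) else 0))
    simp only [one_mul] at outer
    rw [outer, ← Finset.mul_sum, sum_adj_ite H]
    simp [Finset.card_univ]
    ring
  have e3 : ∑ x : V × W, ∑ y : V × W,
      ((if G.Adj x.1 y.1 then (1 : ℚ) else 0) * (if H.Adj x.2 y.2 then (1 : ℚ) else 0))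
      = 4 * (numEdges G : ℚ) * (numEdges H : ℚ) := by
    have inner : ∀ x : V × W, ∑ y : V × W,
        ((if G.Adj x.1 y.1 then (1 : ℚ) else 0) * (if H.Adj x.2 y.2 then (1 : ℚ) else 0))
        = (∑ v : V, (if G.Adj x.1 v then (1 : ℚ) else 0))
            * (∑ w : W, (if H.Adj x.2 w then (1 : ℚ) else 0)) := by
      intro x
      exact sum_prod_mul (fun v => if G.Adj x.1 v then (1 : ℚ) else 0)
        (fun w => if H.Adj x.2 w then (1 : ℚ) else 0)
    simp_rw [inner]
    rw [sum_prod_mul (fun u => ∑ v : V, (if G.Adj u v then (1 : ℚ) else 0))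
        (fun z => ∑ w : W, (if H.Adj z w then (1 : ℚ) else 0))]
    rw [sum_adj_ite G, sum_adj_ite H]
    ring
  rw [e1, e2, e3]
  ring
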